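/- Let α₁ > 0, α₂ > 0, β² < 4α₁α₂, c₁, c₂, d real with d ≥ 0, and h, k, δt > 0, 1/2 ≤ ι ≤ 1. Define for θx, θy ∈ [0, 2π): F_R as in the compact scheme symbol, F_I = c₁·3 sin θx/(h(2+cos θx)) + c₂·3 sin θy/(k(2+cos θy)), and G = (1 − (1−ι)δt(F_R + d + iF_I))/(1 + ιδt(F_R + d + iF_I)). Then |G| ≤ 1 for all θx, θy, i.e., the (9,9) compact scheme with constant coefficients is unconditionally von Neumann stable. -/

import Mathlib

noncomputable def FR (α₁ α₂ β h k θx θy : ℝ) : ℝ :=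
  (α₁ / h ^ 2) * (4 * (1 - Real.cos θx) - 3 * Real.sin θx ^ 2 / (2 + Real.cos θx)) +
  (α₂ / k ^ 2) * (4 * (1 - Real.cos θy) - 3 * Real.sin θy ^ 2 / (2 + Real.cos θy)) +
  (β / (h * k)) * Real.sin θx * Real.sin θy *
    (3 / (2 + Real.cos θx) + 3 / (2 + Real.cos θy) - 1)

noncomputable def FI (c₁ c₂ h k θx θy : ℝ) : ℝ :=
  c₁ * (3 * Real.sin θx / (h * (2 + Real.cos θx))) +
  c₂ * (3 * Real.sin θy / (k * (2 + Real.cos θy)))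

lemma keyM (a b : ℝ) (ha : 0 ≤ a) (ha2 : a ≤ 2) (hb : 0 ≤ b) (hb2 : b ≤ 2) :
    0 ≤ 108 - 45*a - 45*b + 15*a*b + 2*a^2*b + 2*a*b^2 - a^2*b^2 := by
  nlinarith [mul_nonneg ha hb, mul_nonneg (sub_nonneg.2 ha2) (sub_nonneg.2 hb2),
    mul_nonneg (mul_nonneg ha hb) (sub_nonneg.2 ha2),
    mul_nonneg (mul_nonneg ha hb) (sub_nonneg.2 hb2),
    mul_nonneg (mul_nonneg ha (sub_nonneg.2 ha2)) (mul_nonneg hb (sub_nonneg.2 hb2)),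
    sq_nonneg (a-b), sq_nonneg (a*b-4)]

set_option maxHeartbeats 1000000 in
lemma key (u v : ℝ) (hu1 : 1 ≤ u) (hu3 : u ≤ 3) (hv1 : 1 ≤ v) (hv3 : v ≤ 3) :
    (u-1)*(v-1)*(3*u+3*v-u*v)^2 ≤ u*v*(u+3)*(v+3) := by
  have h := keyM (3-u) (3-v) (by linarith) (by linarith) (by linarith) (by linarith)
  nlinarith [sq_nonneg (u-v), mul_nonneg (mul_nonneg (sub_nonneg.2 hu3) (sub_nonneg.2 hv3)) h]

set_option maxHeartbeats 1000000 in
lemma FR_nonneg (α₁ α₂ β h k θx θy : ℝ)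
    (h1 : α₁ > 0) (h2 : α₂ > 0) (h3 : β ^ 2 < 4 * α₁ * α₂) (hh : h > 0) (hk : k > 0) :
    0 ≤ FR α₁ α₂ β h k θx θy := by
  have hcx1 : -1 ≤ Real.cos θx := Real.neg_one_le_cos θx
  have hcx2 : Real.cos θx ≤ 1 := Real.cos_le_one θx
  have hcy1 : -1 ≤ Real.cos θy := Real.neg_one_le_cos θy
  have hcy2 : Real.cos θy ≤ 1 := Real.cos_le_one θy
  set cx := Real.cos θx
  set cy := Real.cos θy
  set sx := Real.sin θx with hsx
  set sy := Real.sin θy with hsy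
  have hsx2 : sx ^ 2 = 1 - cx ^ 2 := Real.sin_sq θx
  have hsy2 : sy ^ 2 = 1 - cy ^ 2 := Real.sin_sq θy
  have hu0 : (0:ℝ) < 2 + cx := by linarith
  have hv0 : (0:ℝ) < 2 + cy := by linarith
  set a1 : ℝ := α₁ / h ^ 2 with ha1
  set a2 : ℝ := α₂ / k ^ 2 with ha2
  set b : ℝ := β / (h * k) with hb
  have ha1p : 0 < a1 := by rw [ha1]; positivity
  have ha2p : 0 < a2 := by rw [ha2]; positivity
  have hb2 : b ^ 2 < 4 * a1 * a2 := by
    rw [hb, ha1, ha2, div_pow]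
    rw [div_lt_iff₀ (by positivity)]
    have he : 4 * (α₁ / h ^ 2) * (α₂ / k ^ 2) * (h * k) ^ 2 = 4 * α₁ * α₂ := by
      field_simp
    rw [he]; exact h3
  set Px : ℝ := (1 - cx) * (5 + cx) / (2 + cx) with hPx
  set Py : ℝ := (1 - cy) * (5 + cy) / (2 + cy) with hPy
  set W : ℝ := sx * sy * ((3*(2+cy) + 3*(2+cx) - (2+cx)*(2+cy)) / ((2+cx)*(2+cy))) with hW
  have hPx0 : 0 ≤ Px := by
    rw [hPx]; apply div_nonneg _ hu0.le; nlinarith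
  have hPy0 : 0 ≤ Py := by
    rw [hPy]; apply div_nonneg _ hv0.le; nlinarith
  have e1 : 4 * (1 - cx) - 3 * sx ^ 2 / (2 + cx) = Px := by
    rw [hsx2, hPx]; field_simp; try ring
  have e2 : 4 * (1 - cy) - 3 * sy ^ 2 / (2 + cy) = Py := by
    rw [hsy2, hPy]; field_simp; try ring
  have e3 : 3 / (2 + cx) + 3 / (2 + cy) - 1
      = (3*(2+cy) + 3*(2+cx) - (2+cx)*(2+cy)) / ((2+cx)*(2+cy)) := by
    field_simp; try ring
  have hFReq : FR α₁ α₂ β h k θx θy = a1 * Px + a2 * Py + b * W := by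
    unfold FR
    rw [← hsx, ← hsy, e1, e2, e3, hW, ha1, ha2, hb]
    ring
  have hWsq : W ^ 2 ≤ Px * Py := by
    rw [hW, hPx, hPy]
    rw [mul_pow, mul_pow, hsx2, hsy2, div_pow]
    have lhs_eq : (1-cx^2)*(1-cy^2)*((3*(2+cy)+3*(2+cx)-(2+cx)*(2+cy))^2/((2+cx)*(2+cy))^2)
        = ((1-cx^2)*(1-cy^2)*(3*(2+cy)+3*(2+cx)-(2+cx)*(2+cy))^2)/((2+cx)*(2+cy))^2 := by
      ring
    have rhs_eq : (1-cx)*(5+cx)/(2+cx) * ((1-cy)*(5+cy)/(2+cy))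
        = ((1-cx)*(5+cx)*((1-cy)*(5+cy)))/((2+cx)*(2+cy)) := by
      field_simp
    rw [lhs_eq, rhs_eq, div_le_div_iff₀ (by positivity) (by positivity)]
    have hkey := key (2+cx) (2+cy) (by linarith) (by linarith) (by linarith) (by linarith)
    have h30 : 0 ≤ (1 - cx) * (1 - cy) := by nlinarith
    nlinarith [mul_le_mul_of_nonneg_right (mul_le_mul_of_nonneg_left hkey h30)
      (mul_pos hu0 hv0).le]
  rw [hFReq]
  have hS0 : 0 ≤ a1 * Px + a2 * Py :=
    add_nonneg (mul_nonneg ha1p.le hPx0) (mul_nonneg ha2p.le hPy0)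
  have hbW : (b*W)^2 ≤ 4*a1*a2*(Px*Py) := by
    have h4 : b^2 * W^2 ≤ b^2 * (Px*Py) := mul_le_mul_of_nonneg_left hWsq (sq_nonneg b)
    have h5 : b^2 * (Px*Py) ≤ 4*a1*a2*(Px*Py) :=
      mul_le_mul_of_nonneg_right hb2.le (mul_nonneg hPx0 hPy0)
    calc (b*W)^2 = b^2 * W^2 := by ring
    _ ≤ _ := le_trans h4 h5
  have hS2 : (b*W)^2 ≤ (a1 * Px + a2 * Py)^2 :=
    le_trans hbW (by nlinarith [sq_nonneg (a1*Px - a2*Py)])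
  nlinarith [hS2, hS0]

lemma amp (A B δt ι : ℝ) (hA : 0 ≤ A) (hδt : 0 < δt) (hι1 : (1:ℝ)/2 ≤ ι) (hι2 : ι ≤ 1) :
    ‖((1 - ((1 - ι) * δt : ℝ) * ((A : ℝ) + (B : ℝ) * Complex.I)) /
      (1 + ((ι * δt : ℝ)) * ((A : ℝ) + (B : ℝ) * Complex.I)))‖ ≤ 1 := by
  have hnum : (1 - (((1 - ι) * δt : ℝ) : ℂ) * ((A : ℝ) + (B : ℝ) * Complex.I))
      = ((1 - (1 - ι) * δt * A : ℝ) : ℂ) + ((-((1 - ι) * δt * B) : ℝ)) * Complex.I := by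
    push_cast; ring
  have hden : (1 + ((ι * δt : ℝ) : ℂ) * ((A : ℝ) + (B : ℝ) * Complex.I))
      = ((1 + ι * δt * A : ℝ) : ℂ) + ((ι * δt * B : ℝ)) * Complex.I := by
    push_cast; ring
  have hι0 : (0:ℝ) < ι := by linarith
  have hden1 : (1:ℝ) ≤ (1 + ι * δt * A) ^ 2 + (ι * δt * B) ^ 2 := by
    nlinarith [mul_nonneg (mul_nonneg hι0.le hδt.le) hA, sq_nonneg (ι * δt * B)]
  rw [norm_div, hnum, hden, Complex.norm_add_mul_I, Complex.norm_add_mul_I,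
    div_le_one (Real.sqrt_pos.2 (by nlinarith))]
  apply Real.sqrt_le_sqrt
  nlinarith [mul_nonneg hδt.le hA,
    mul_nonneg (by linarith : (0:ℝ) ≤ 2*ι - 1) (sq_nonneg (δt * A)),
    mul_nonneg (by linarith : (0:ℝ) ≤ 2*ι - 1) (sq_nonneg (δt * B))]

theorem unconditional_von_neumann_stability
    (α₁ α₂ β c₁ c₂ d h k δt ι : ℝ)
    (h1 : α₁ > 0) (h2 : α₂ > 0) (h3 : β ^ 2 < 4 * α₁ * α₂) (hd : d ≥ 0)
    (hh : h > 0) (hk : k > 0) (hδt : δt > 0) (hι1 : (1:ℝ)/2 ≤ ι) (hι2 : ι ≤ 1) :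
    ∀ θx ∈ Set.Ico (0:ℝ) (2 * Real.pi), ∀ θy ∈ Set.Ico (0:ℝ) (2 * Real.pi),
      ‖((1 - ((1 - ι) * δt : ℝ) *
            ((FR α₁ α₂ β h k θx θy + d : ℝ) + (FI c₁ c₂ h k θx θy : ℝ) * Complex.I)) /
          (1 + (ι * δt : ℝ) *
            ((FR α₁ α₂ β h k θx θy + d : ℝ) + (FI c₁ c₂ h k θx θy : ℝ) * Complex.I)))‖ ≤ 1 := by
  intro θx _ θy _
  exact amp (FR α₁ α₂ β h k θx θy + d) (FI c₁ c₂ h k θx θy)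
    δt ι (add_nonneg (FR_nonneg α₁ α₂ β h k θx θy h1 h2 h3 hh hk) hd) hδt hι1 hι2
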